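/- There exists c ∈ ℝ such that the left half-plane {z ∈ ℂ : Re(z) < c} is contained in the basin B; in particular some connected component of B contains a left half-plane. -/

import Mathlib

open Complex Metric Set Filter Function Topology

noncomputable section

namespace Stmt14Aux

/-- Holomorphic logarithm of a nonvanishing holomorphic function on a ball. -/
lemma exists_log {G : ℂ → ℂ} {c : ℂ} {r : ℝ} (hr : 0 < r)
    (hG : DifferentiableOn ℂ G (ball c r)) (hne : ∀ z ∈ ball c r, G z ≠ 0) :
    ∃ L : ℂ → ℂ, DifferentiableOn ℂ L (ball c r) ∧
      ∀ z ∈ ball c r, Complex.exp (L z) = G z := by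
  have hball : IsOpen (ball c r) := isOpen_ball
  have hcball : c ∈ ball c r := mem_ball_self hr
  have hderiv : ContinuousOn (deriv G) (ball c r) :=
    ((hG.analyticOnNhd hball).deriv).continuousOn
  set q : ℂ → ℂ := fun z => deriv G z / G z with hq
  have hqc : ContinuousOn q (ball c r) := hderiv.div hG.continuousOn hne
  set proj : ℝ → ℝ := fun t => max 0 (min 1 t) with hprojdef
  have hprojc : Continuous proj := continuous_const.max (continuous_const.min continuous_id)
  have hproj0 : ∀ t, 0 ≤ proj t ∧ proj t ≤ 1 := by
    intro t
    constructor
    · exact le_max_left _ _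
    · exact max_le zero_le_one (min_le_left _ _)
  have hprojid : ∀ t ∈ Icc (0:ℝ) 1, proj t = t := by
    rintro t ⟨h0, h1⟩
    simp only [hprojdef, min_eq_right h1, max_eq_right h0]
  have hseg : ∀ z ∈ ball c r, ∀ t : ℝ, 0 ≤ t → t ≤ 1 → c + t • (z - c) ∈ ball c r := by
    intro z hz t ht0 ht1
    simp only [mem_ball, dist_eq_norm] at hz ⊢
    have h1 : ‖c + t • (z - c) - c‖ = |t| * ‖z - c‖ := by
      rw [add_sub_cancel_left, norm_smul, Real.norm_eq_abs]
    rw [h1, _root_.abs_of_nonneg ht0]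
    calc t * ‖z - c‖ ≤ 1 * ‖z - c‖ := by
          apply mul_le_mul_of_nonneg_right ht1 (norm_nonneg _)
      _ = ‖z - c‖ := one_mul _
      _ < r := hz
  set L : ℂ → ℂ := fun z =>
    Complex.log (G c) + ∫ t in (0:ℝ)..1, (z - c) * q (c + proj t • (z - c)) with hLdef
  -- continuity of L on the ball
  have hLc : ContinuousOn L (ball c r) := by
    rw [continuousOn_iff_continuous_restrict]
    apply continuous_const.add
    have hmap : Continuous fun zt : (ball c r) × ℝ =>
        c + proj zt.2 • ((zt.1 : ℂ) - c) := by
      apply continuous_const.add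
      exact (hprojc.comp continuous_snd).smul
        ((continuous_subtype_val.comp continuous_fst).sub continuous_const)
    have hmem : ∀ zt : (ball c r) × ℝ,
        c + proj zt.2 • ((zt.1 : ℂ) - c) ∈ ball c r := fun zt =>
      hseg _ zt.1.2 _ (hproj0 _).1 (hproj0 _).2
    have hqq : Continuous fun zt : (ball c r) × ℝ =>
        q (c + proj zt.2 • ((zt.1 : ℂ) - c)) := hqc.comp_continuous hmap hmem
    have : Continuous fun zt : (ball c r) × ℝ =>
        ((zt.1 : ℂ) - c) * q (c + proj zt.2 • ((zt.1 : ℂ) - c)) :=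
      ((continuous_subtype_val.comp continuous_fst).sub continuous_const).mul hqq
    exact intervalIntegral.continuous_parametric_intervalIntegral_of_continuous'
      (f := fun (z : ↥(ball c r)) (t : ℝ) => ((z : ℂ) - c) * q (c + proj t • ((z : ℂ) - c)))
      this 0 1
  -- the key identity
  have KEY : ∀ z ∈ ball c r, Complex.exp (L z) = G z := by
    intro z hz
    rcases eq_or_ne z c with rfl | hzc
    · have : L z = Complex.log (G z) := by
        simp only [hLdef, sub_self, zero_mul, intervalIntegral.integral_zero, add_zero]
      rw [this, Complex.exp_log (hne z hz)]
    · set v : ℂ := z - c with hvdef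
      have hvne : v ≠ 0 := sub_ne_zero.2 hzc
      have hvpos : 0 < ‖v‖ := norm_pos_iff.2 hvne
      set w : ℝ → ℂ := fun s => c + s • v with hwdef
      set T : ℝ := r / ‖v‖ with hTdef
      have hT1 : 1 < T := by
        rw [hTdef, lt_div_iff₀ hvpos, one_mul]
        simpa [dist_eq_norm] using hz
      have hwmem : ∀ s ∈ Ioo (-T) T, w s ∈ ball c r := by
        rintro s ⟨hs1, hs2⟩
        simp only [hwdef, mem_ball, dist_eq_norm, add_sub_cancel_left, norm_smul,
          Real.norm_eq_abs]
        have habs : |s| < T := abs_lt.2 ⟨hs1, hs2⟩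
        calc |s| * ‖v‖ < T * ‖v‖ := by
              exact mul_lt_mul_of_pos_right habs hvpos
          _ = r := div_mul_cancel₀ r (ne_of_gt hvpos)
      have hsub : Icc (0:ℝ) 1 ⊆ Ioo (-T) T := by
        rintro s ⟨h0, h1⟩
        exact ⟨by linarith, lt_of_le_of_lt h1 hT1⟩
      set i : ℝ → ℂ := fun t => v * q (w t) with hidef
      have hic : ContinuousOn i (Ioo (-T) T) := by
        apply ContinuousOn.mul continuousOn_const
        apply hqc.comp _ hwmem
        exact (continuous_const.add (continuous_id.smul continuous_const)).continuousOn
      have hg1 : ∀ s ∈ Icc (0:ℝ) 1,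
          HasDerivAt (fun s' => ∫ t in (0:ℝ)..s', i t) (i s) s := by
        intro s hs
        have hsIoo : s ∈ Ioo (-T) T := hsub hs
        apply intervalIntegral.integral_hasDerivAt_right
        · apply ContinuousOn.intervalIntegrable
          apply hic.mono
          rw [uIcc_of_le (hs.1 : (0:ℝ) ≤ s)] -- careful: uIcc 0 s
          intro t ht
          exact ⟨lt_of_lt_of_le (by linarith [hT1]) ht.1,
            lt_of_le_of_lt ht.2 hsIoo.2⟩
        · exact hic.stronglyMeasurableAtFilter isOpen_Ioo _ hsIoo
        · exact (hic s hsIoo).continuousAt (isOpen_Ioo.mem_nhds hsIoo)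
      set g1 : ℝ → ℂ := fun s' => ∫ t in (0:ℝ)..s', i t with hg1def
      set φ : ℝ → ℂ := fun s => Complex.exp (-g1 s) * G (w s) with hφdef
      have hφd : ∀ s ∈ Icc (0:ℝ) 1, HasDerivAt φ 0 s := by
        intro s hs
        have hws : w s ∈ ball c r := hwmem s (hsub hs)
        have hGne : G (w s) ≠ 0 := hne _ hws
        have hGd : HasDerivAt G (deriv G (w s)) (w s) :=
          (hG.differentiableAt (hball.mem_nhds hws)).hasDerivAt
        have hwd : HasDerivAt w v s := by
          have h1 : HasDerivAt (fun s' : ℝ => s' • v) ((1:ℝ) • v) s :=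
            (hasDerivAt_id s).smul_const v
          have h2 := h1.const_add c
          rw [one_smul] at h2
          exact h2
        have hGW : HasDerivAt (fun s' => G (w s')) (v • deriv G (w s)) s :=
          hGd.scomp s hwd
        have h1 : HasDerivAt (fun s' => Complex.exp (-g1 s')) 
            (Complex.exp (-g1 s) * (-i s)) s := ((hg1 s hs).neg).cexp
        have htot := h1.mul hGW
        have hzero : Complex.exp (-g1 s) * (-i s) * G (w s)
            + Complex.exp (-g1 s) * (v • deriv G (w s)) = 0 := by
          simp only [hidef, hq, smul_eq_mul]
          field_simp
          ring
        rw [hzero] at htot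
        exact htot
      have hφc : ContinuousOn φ (Icc 0 1) := fun s hs =>
        ((hφd s hs).continuousAt).continuousWithinAt
      have hconst : φ 1 = φ 0 :=
        constant_of_has_deriv_right_zero hφc
          (fun s hs => (hφd s (Ico_subset_Icc_self hs)).hasDerivWithinAt)
          1 ⟨zero_le_one, le_refl 1⟩
      have hφ0 : φ 0 = G c := by
        simp only [hφdef, hg1def, hwdef, intervalIntegral.integral_same, neg_zero,
          Complex.exp_zero, one_mul, zero_smul, add_zero]
      have hw1 : w 1 = z := by simp [hwdef, hvdef]
      have hφ1 : φ 1 = Complex.exp (-g1 1) * G z := by simp only [hφdef]; rw [hw1]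
      have h2 : Complex.exp (-g1 1) * G z = G c := by rw [← hφ1, ← hφ0]; exact hconst
      have hLz : L z = Complex.log (G c) + g1 1 := by
        simp only [hLdef, hg1def, hidef, hwdef, hvdef]
        congr 1
        apply intervalIntegral.integral_congr
        intro t ht
        rw [uIcc_of_le zero_le_one] at ht
        simp only [hprojid t ht]
      rw [hLz, Complex.exp_add, Complex.exp_log (hne c hcball), ← h2]
      rw [mul_comm (Complex.exp (-g1 1)) (G z), mul_assoc, ← Complex.exp_add]
      simp
  -- differentiability
  refine ⟨L, ?_, KEY⟩
  intro z₁ hz₁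
  suffices h : DifferentiableAt ℂ L z₁ by exact h.differentiableWithinAt
  set ψ : ℂ → ℂ := fun z => Complex.log (G z * Complex.exp (-L z₁)) + L z₁ with hψdef
  have hone : G z₁ * Complex.exp (-L z₁) = 1 := by
    rw [← KEY z₁ hz₁, ← Complex.exp_add]; simp
  set V : Set ℂ := (ball c r) ∩ ((fun z => G z * Complex.exp (-L z₁)) ⁻¹' Complex.slitPlane)
    with hVdef
  have hVopen : IsOpen V := by
    apply ContinuousOn.isOpen_inter_preimage _ hball Complex.isOpen_slitPlane
    exact hG.continuousOn.mul continuousOn_const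
  have hz₁V : z₁ ∈ V := by
    refine ⟨hz₁, ?_⟩
    simp only [Set.mem_preimage, hone]
    exact Complex.one_mem_slitPlane
  have hψdiff : DifferentiableAt ℂ ψ z₁ := by
    apply DifferentiableAt.add_const
    apply DifferentiableAt.clog
    · exact (hG.differentiableAt (hball.mem_nhds hz₁)).mul_const _
    · rw [hone]; exact Complex.one_mem_slitPlane
  have hexpψ : ∀ z ∈ V, Complex.exp (ψ z) = G z := by
    rintro z ⟨hzb, hzs⟩
    have hnz : G z * Complex.exp (-L z₁) ≠ 0 :=
      mul_ne_zero (hne z hzb) (Complex.exp_ne_zero _)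
    simp only [hψdef]
    rw [Complex.exp_add, Complex.exp_log hnz, mul_assoc, ← Complex.exp_add]
    simp
  have hψz₁ : ψ z₁ = L z₁ := by
    simp only [hψdef, hone, Complex.log_one, zero_add]
  have hLat : ContinuousAt L z₁ := hLc.continuousAt (hball.mem_nhds hz₁)
  have hψat : ContinuousAt ψ z₁ := hψdiff.continuousAt
  have htend : Tendsto (fun z => L z - ψ z) (𝓝 z₁) (𝓝 0) := by
    have h := hLat.sub hψat
    unfold ContinuousAt at h
    simp [hψz₁] at h
    exact h
  have h2pi : (0:ℝ) < 2 * Real.pi := by positivity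
  have hsmall : ∀ᶠ z in 𝓝 z₁, ‖L z - ψ z‖ < 2 * Real.pi := by
    filter_upwards [htend (Metric.ball_mem_nhds (0:ℂ) h2pi)] with z hz
    simpa [dist_zero_right] using hz
  have hVnb : ∀ᶠ z in 𝓝 z₁, z ∈ V := hVopen.mem_nhds hz₁V
  have heq : L =ᶠ[𝓝 z₁] ψ := by
    filter_upwards [hsmall, hVnb] with z h1 h2
    have hexp : Complex.exp (L z) = Complex.exp (ψ z) := by
      rw [KEY z h2.1, hexpψ z h2]
    obtain ⟨n, hn⟩ := Complex.exp_eq_exp_iff_exists_int.1 hexp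
    have h1' : ‖(n : ℂ) * (2 * (Real.pi : ℂ) * I)‖ < 2 * Real.pi := by
      rw [show (n : ℂ) * (2 * (Real.pi : ℂ) * I) = L z - ψ z by rw [hn]; ring]
      exact h1
    have hnormval : ‖(n : ℂ) * (2 * (Real.pi : ℂ) * I)‖ = |(n : ℝ)| * (2 * Real.pi) := by
      rw [norm_mul]
      congr 1
      · exact_mod_cast Complex.norm_intCast n
      · rw [norm_mul, norm_mul, Complex.norm_I, mul_one]
        simp [Complex.norm_real, Real.pi_nonneg]
    rw [hnormval] at h1'
    have habs : |(n : ℝ)| < 1 := by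
      by_contra hcon
      push_neg at hcon
      nlinarith [h2pi]
    have hn0 : n = 0 := by
      have h3 : |n| < 1 := by exact_mod_cast (by rwa [← Int.cast_abs] at habs : ((|n| : ℤ) : ℝ) < 1)
      rw [abs_lt] at h3
      omega
    rw [hn, hn0]
    simp
  exact hψdiff.congr_of_eventuallyEq heq

end Stmt14Aux

namespace Stmt14Aux

/-- A Bloch-type theorem with an explicit (bad) constant. -/
lemma bloch {h : ℂ → ℂ} {c : ℂ} {r : ℝ} (hr : 0 < r)
    (hd : DifferentiableOn ℂ h (ball c r)) :
    ∃ w : ℂ, ball w (r * ‖deriv h c‖ / 98) ⊆ h '' (ball c r) := by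
  rcases eq_or_ne (deriv h c) 0 with h0 | h0
  · refine ⟨h c, ?_⟩
    rw [h0]
    simp only [norm_zero, mul_zero, zero_div]
    rw [Metric.ball_zero]
    exact empty_subset _
  have hball : IsOpen (ball c r) := isOpen_ball
  have hderivc : ContinuousOn (deriv h) (ball c r) :=
    ((hd.analyticOnNhd hball).deriv).continuousOn
  set R : ℝ := r / 2 with hRdef
  have hRpos : 0 < R := by positivity
  have hRr : R < r := by rw [hRdef]; linarith
  have hcb : closedBall c R ⊆ ball c r := by
    apply closedBall_subset_ball hRr
  set φ : ℂ → ℝ := fun z => (R - dist z c) * ‖deriv h z‖ with hφdef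
  have hφcont : ContinuousOn φ (closedBall c R) := by
    apply ContinuousOn.mul
    · exact (continuous_const.sub (continuous_id.dist continuous_const)).continuousOn
    · exact (hderivc.mono hcb).norm
  obtain ⟨a, haR, hamax⟩ := (isCompact_closedBall c R).exists_isMaxOn
    ⟨c, mem_closedBall_self hRpos.le⟩ hφcont
  set K : ℝ := φ a with hKdef
  have hKc : R * ‖deriv h c‖ ≤ K := by
    have := hamax (mem_closedBall_self hRpos.le)
    simpa [hφdef] using this
  have hKpos : 0 < K :=
    lt_of_lt_of_le (mul_pos hRpos (norm_pos_iff.2 h0)) hKc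
  have haRlt : dist a c < R := by
    rcases lt_or_eq_of_le (mem_closedBall.1 haR) with h1 | h1
    · exact h1
    · exfalso
      have : K = 0 := by simp [hKdef, hφdef, h1]
      linarith
  set t : ℝ := (R - dist a c) / 2 with htdef
  have htpos : 0 < t := by rw [htdef]; linarith
  have hbt : ball a t ⊆ ball c r := by
    intro ζ hζ
    rw [mem_ball] at hζ ⊢
    calc dist ζ c ≤ dist ζ a + dist a c := dist_triangle _ _ _
      _ < t + dist a c := by linarith
      _ ≤ R := by rw [htdef]; linarith
      _ < r := hRr
  -- derivative bounds on ball a t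
  have hbound : ∀ ζ ∈ ball a t, ‖deriv h ζ‖ < K / t := by
    intro ζ hζ
    rw [mem_ball] at hζ
    have hζR : dist ζ c < R - t := by
      calc dist ζ c ≤ dist ζ a + dist a c := dist_triangle _ _ _
        _ < t + dist a c := by linarith
        _ = R - t := by rw [htdef]; ring
    have hζcb : ζ ∈ closedBall c R := by
      rw [mem_closedBall]; linarith
    have hφζ : (R - dist ζ c) * ‖deriv h ζ‖ ≤ K := hamax hζcb
    have htlt : t < R - dist ζ c := by linarith
    by_cases hz0 : ‖deriv h ζ‖ = 0
    · rw [hz0]; positivity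
    have hz0' : 0 < ‖deriv h ζ‖ := lt_of_le_of_ne (norm_nonneg _) (Ne.symm hz0)
    rw [lt_div_iff₀ htpos]
    calc ‖deriv h ζ‖ * t < ‖deriv h ζ‖ * (R - dist ζ c) := by
          exact mul_lt_mul_of_pos_left htlt hz0'
      _ = (R - dist ζ c) * ‖deriv h ζ‖ := by ring
      _ ≤ K := hφζ
  have hda : ‖deriv h a‖ = K / (2 * t) := by
    have : K = (2 * t) * ‖deriv h a‖ := by
      rw [hKdef, hφdef, htdef]; ring
    rw [this]; field_simp
  -- Schwarz lemma for deriv h on ball a t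
  have hmaps : MapsTo (deriv h) (ball a t) (ball (deriv h a) (3 * K / (2 * t))) := by
    intro ζ hζ
    rw [mem_ball, dist_eq_norm]
    calc ‖deriv h ζ - deriv h a‖ ≤ ‖deriv h ζ‖ + ‖deriv h a‖ := norm_sub_le _ _
      _ < K / t + K / (2 * t) := by
          apply add_lt_add_of_lt_of_le (hbound ζ hζ)
          rw [hda]
      _ = 3 * K / (2 * t) := by field_simp; ring
  have hdd : DifferentiableOn ℂ (deriv h) (ball a t) :=
    (((hd.analyticOnNhd hball).deriv).differentiableOn).mono hbt
  have hschwarz : ∀ ζ ∈ ball a t,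
      ‖deriv h ζ - deriv h a‖ ≤ 3 * K / (2 * t) / t * dist ζ a := by
    intro ζ hζ
    have := Complex.dist_le_div_mul_dist_of_mapsTo_ball hdd (hmaps.mono_right ball_subset_closedBall) hζ
    rwa [dist_eq_norm] at this
  set σ : ℝ := t / 7 with hσdef
  have hσpos : 0 < σ := by positivity
  have hσt : σ < t := by rw [hσdef]; linarith
  have hcbσ : closedBall a σ ⊆ ball a t := closedBall_subset_ball hσt
  -- linear approximation on closedBall a σ
  set d : ℂ := deriv h a with hddef
  have hconv : Convex ℝ (closedBall a σ) := convex_closedBall a σ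
  have hDW : ∀ x ∈ closedBall a σ,
      HasDerivWithinAt (fun y => h y - d * y) (deriv h x - d) (closedBall a σ) x := by
    intro x hx
    have hxb : x ∈ ball c r := hbt (hcbσ hx)
    have hh : HasDerivAt h (deriv h x) x :=
      (hd.differentiableAt (hball.mem_nhds hxb)).hasDerivAt
    have h2 : HasDerivAt (fun y : ℂ => d * y) d x := by
      simpa using (hasDerivAt_id x).const_mul d
    exact (hh.sub h2).hasDerivWithinAt
  have hDB : ∀ x ∈ closedBall a σ, ‖deriv h x - d‖ ≤ 3 * K / (2 * t) / t * σ := by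
    intro x hx
    have hxb : x ∈ ball a t := hcbσ hx
    calc ‖deriv h x - d‖ ≤ 3 * K / (2 * t) / t * dist x a := hschwarz x hxb
      _ ≤ 3 * K / (2 * t) / t * σ := by
          apply mul_le_mul_of_nonneg_left (mem_closedBall.1 hx)
          positivity
  have happrox : ∀ z ∈ closedBall a σ, ‖(h z - d * z) - (h a - d * a)‖ ≤
      3 * K / (2 * t) / t * σ * ‖z - a‖ := fun z hz =>
    Convex.norm_image_sub_le_of_norm_hasDerivWithin_le hDW hDB hconv
      (mem_closedBall_self hσpos.le) hz
  -- lower bound on the sphere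
  have hlower : ∀ z ∈ sphere a σ, 2 * K / 49 ≤ ‖h z - h a‖ := by
    intro z hz
    rw [mem_sphere] at hz
    have hza : ‖z - a‖ = σ := by rw [← dist_eq_norm, hz]
    have h1 : ‖h z - h a - d * (z - a)‖ ≤ 3 * K / (2 * t) / t * σ * σ := by
      have := happrox z (by rw [mem_closedBall, hz])
      calc ‖h z - h a - d * (z - a)‖ = ‖h z - d * z - (h a - d * a)‖ := by ring_nf
        _ ≤ 3 * K / (2 * t) / t * σ * ‖z - a‖ := this
        _ = 3 * K / (2 * t) / t * σ * σ := by rw [hza]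
    have h2 : ‖d * (z - a)‖ = K / (2 * t) * σ := by
      rw [norm_mul, hda, hza]
    have h3 : ‖h z - h a‖ ≥ ‖d * (z - a)‖ - ‖h z - h a - d * (z - a)‖ := by
      have := norm_sub_norm_le (d * (z - a)) (d * (z - a) - (h z - h a))
      have heq : d * (z - a) - (d * (z - a) - (h z - h a)) = h z - h a := by ring
      rw [heq] at this
      calc ‖d * (z - a)‖ - ‖h z - h a - d * (z - a)‖
          = ‖d * (z - a)‖ - ‖d * (z - a) - (h z - h a)‖ := by rw [norm_sub_rev]
        _ ≤ ‖h z - h a‖ := this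
    have hval : K / (2 * t) * σ - 3 * K / (2 * t) / t * σ * σ = 2 * K / 49 := by
      rw [hσdef]; field_simp; ring
    linarith
  -- conclusion via minimum modulus
  refine ⟨h a, ?_⟩
  intro v hv
  rw [mem_ball] at hv
  have hvK : dist v (h a) < K / 49 := by
    apply lt_of_lt_of_le hv
    rw [hRdef] at hKc
    rw [div_le_div_iff₀ (by norm_num) (by norm_num)]
    nlinarith [hKc]
  by_contra hvim
  have hnev : ∀ z ∈ closedBall a σ, h z ≠ v := by
    intro z hz hzv
    exact hvim ⟨z, hbt (hcbσ hz), hzv⟩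
  have hdiffG : DiffContOnCl ℂ (fun z => (h z - v)⁻¹) (ball a σ) := by
    constructor
    · apply DifferentiableOn.inv
      · exact ((hd.mono (subset_trans (ball_subset_closedBall.trans hcbσ) hbt)).sub
          (differentiableOn_const v))
      · intro z hz; exact sub_ne_zero.2 (hnev z (ball_subset_closedBall hz))
    · rw [closure_ball a hσpos.ne']
      apply ContinuousOn.inv₀
      · exact ((hd.continuousOn.mono (hcbσ.trans hbt)).sub continuousOn_const)
      · intro z hz; exact sub_ne_zero.2 (hnev z hz)
  have hfr : ∀ z ∈ frontier (ball a σ), ‖(h z - v)⁻¹‖ ≤ (K / 49)⁻¹ := by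
    intro z hz
    rw [frontier_ball a hσpos.ne'] at hz
    have hlow := hlower z hz
    have hzv : K / 49 ≤ ‖h z - v‖ := by
      have : ‖h z - v‖ ≥ ‖h z - h a‖ - ‖v - h a‖ := by
        have h4 := norm_sub_norm_le (h z - h a) (v - h a)
        have heq : h z - h a - (v - h a) = h z - v := by ring
        rw [heq] at h4
        linarith
      have hd2 : ‖v - h a‖ < K / 49 := by rwa [dist_eq_norm] at hvK
      linarith
    rw [norm_inv]
    apply inv_anti₀ (by positivity) hzv
  have hcenter := Complex.norm_le_of_forall_mem_frontier_norm_le isBounded_ball hdiffG hfr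
    (subset_closure (mem_ball_self hσpos))
  have hne0 : h a - v ≠ 0 := sub_ne_zero.2 (hnev a (mem_closedBall_self hσpos.le))
  rw [norm_inv] at hcenter
  have : K / 49 ≤ ‖h a - v‖ := by
    have hpos : 0 < ‖h a - v‖ := norm_pos_iff.2 hne0
    exact (inv_le_inv₀ hpos (by positivity)).1 hcenter
  rw [← dist_eq_norm, dist_comm] at this
  linarith

end Stmt14Aux

theorem stmt14
    (lam : ℂ) (hlam : lam ≠ 0)
    (f : ℂ → ℂ) (hf : f = fun z => lam * Complex.exp z)
    (p : ℕ) (hp : 1 ≤ p)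
    (z₀ : ℂ) (hper : f^[p] z₀ = z₀)
    (hmin : ∀ j, 0 < j → j < p → f^[j] z₀ ≠ z₀)
    (hattr : ‖deriv (f^[p]) z₀‖ < 1)
    (C : Set ℂ) (hC : C = {w | ∃ j < p, f^[j] z₀ = w})
    (B : Set ℂ)
    (hB : B = {z | Filter.Tendsto (fun n => Metric.infDist (f^[n] z) C) Filter.atTop (nhds 0)}) :
    ∃ c : ℝ, {z : ℂ | z.re < c} ⊆ B := by
  -- Basic facts about f
  have hfne : ∀ z, f z ≠ 0 := by
    intro z; rw [hf]; exact mul_ne_zero hlam (Complex.exp_ne_zero z)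
  have hfd : ∀ z, HasDerivAt f (f z) z := by
    intro z; rw [hf]; simpa [mul_comm] using (Complex.hasDerivAt_exp z).const_mul lam
  have hcont : Continuous f := by
    rw [hf]; exact continuous_const.mul Complex.continuous_exp
  have hcit : ∀ n, Continuous (f^[n]) := by
    intro n
    induction n with
    | zero => simpa using continuous_id
    | succ n ih => rw [Function.iterate_succ]; exact ih.comp hcont
  have hperiod : ∀ z, f (z + 2 * Real.pi * Complex.I) = f z := by
    intro z
    rw [hf]
    simp only
    rw [Complex.exp_add]
    have : Complex.exp (2 * Real.pi * Complex.I) = 1 := Complex.exp_two_pi_mul_I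
    rw [this, mul_one]
  -- derivatives of iterates
  set P : ℕ → ℂ → ℂ := fun n z => ∏ j ∈ Finset.range n, f (f^[j] z) with hPdef
  have hPd : ∀ n z, HasDerivAt (f^[n]) (P n z) z := by
    intro n
    induction n with
    | zero => intro z; simpa [hPdef] using hasDerivAt_id z
    | succ n ih =>
      intro z
      have h1 : HasDerivAt (f^[n] ∘ f) (P n (f z) * f z) z := (ih (f z)).comp z (hfd z)
      rw [Function.iterate_succ]
      convert h1 using 1
      simp only [hPdef]
      rw [Finset.prod_range_succ']
      congr 1
  have hPne : ∀ n z, P n z ≠ 0 := by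
    intro n z
    simp only [hPdef]
    exact Finset.prod_ne_zero_iff.2 (fun j _ => hfne _)
  have hPcont : ∀ n, Continuous (fun z => P n z) := by
    intro n
    simp only [hPdef]
    apply continuous_finset_prod
    intro j _
    exact hcont.comp (hcit j)
  set μ : ℂ := P p z₀ with hμdef
  have hμ : deriv (f^[p]) z₀ = μ := (hPd p z₀).deriv
  have hμ1 : ‖μ‖ < 1 := by rwa [hμ] at hattr
  have hμ0 : μ ≠ 0 := hPne p z₀
  have hμpos : 0 < ‖μ‖ := norm_pos_iff.2 hμ0
  have hfix : ∀ m, f^[p * m] z₀ = z₀ := by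
    intro m
    rw [Function.iterate_mul]
    exact Function.iterate_fixed hper m
  have hPm : ∀ m, P (p * m) z₀ = μ ^ m := by
    intro m
    induction m with
    | zero => simp [hPdef]
    | succ m ih =>
      have hpm : p * (m + 1) = p * m + p := by ring
      rw [hpm]
      simp only [hPdef] at ih ⊢
      rw [Finset.prod_range_add, ih, pow_succ]
      congr 1
      apply Finset.prod_congr rfl
      intro j _
      congr 1
      rw [Nat.add_comm, Function.iterate_add_apply, hfix m]
  -- local basin
  set K : ℝ := (1 + ‖μ‖) / 2 with hKdef
  have hK1 : K < 1 := by rw [hKdef]; linarith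
  have hKpos : 0 < K := by rw [hKdef]; linarith
  have hμK : ‖μ‖ < K := by rw [hKdef]; linarith
  have hevent : ∀ᶠ w in 𝓝 z₀, ‖P p w‖ < K := by
    have hc : ContinuousAt (fun w => ‖P p w‖) z₀ := ((hPcont p).norm).continuousAt
    exact hc (Iio_mem_nhds (by rwa [hμdef] at hμK))
  obtain ⟨ε₀, hε₀pos, hε₀⟩ := Metric.eventually_nhds_iff.1 hevent
  set ρ : ℝ := ε₀ / 2 with hρdef
  have hρpos : 0 < ρ := by positivity
  have hρball : closedBall z₀ ρ ⊆ {w | ‖P p w‖ < K} := by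
    intro w hw
    apply hε₀
    rw [mem_closedBall] at hw
    calc dist w z₀ ≤ ρ := hw
      _ < ε₀ := by rw [hρdef]; linarith
  have hgmaps : ∀ w ∈ closedBall z₀ ρ, ‖f^[p] w - z₀‖ ≤ K * ‖w - z₀‖ := by
    intro w hw
    have := Convex.norm_image_sub_le_of_norm_hasDerivWithin_le
      (f := f^[p]) (f' := fun x => P p x) (s := closedBall z₀ ρ)
      (fun x _ => (hPd p x).hasDerivWithinAt)
      (fun x hx => le_of_lt (hρball hx))
      (convex_closedBall z₀ ρ) (mem_closedBall_self hρpos.le) hw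
    rwa [hper] at this
  have hgiter : ∀ w ∈ closedBall z₀ ρ, ∀ m : ℕ,
      (f^[p])^[m] w ∈ closedBall z₀ ρ ∧ ‖(f^[p])^[m] w - z₀‖ ≤ K ^ m * ρ := by
    intro w hw m
    induction m with
    | zero =>
      refine ⟨hw, ?_⟩
      simpa [← dist_eq_norm] using (mem_closedBall.1 hw)
    | succ m ih =>
      obtain ⟨ih1, ih2⟩ := ih
      rw [Function.iterate_succ_apply']
      constructor
      · rw [mem_closedBall, dist_eq_norm]
        calc ‖f^[p] ((f^[p])^[m] w) - z₀‖ ≤ K * ‖(f^[p])^[m] w - z₀‖ := hgmaps _ ih1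
          _ ≤ K * ρ := by
              apply mul_le_mul_of_nonneg_left _ hKpos.le
              rw [← dist_eq_norm]; exact mem_closedBall.1 ih1
          _ ≤ 1 * ρ := by nlinarith
          _ = ρ := one_mul ρ
      · calc ‖f^[p] ((f^[p])^[m] w) - z₀‖ ≤ K * ‖(f^[p])^[m] w - z₀‖ := hgmaps _ ih1
          _ ≤ K * (K ^ m * ρ) := mul_le_mul_of_nonneg_left ih2 hKpos.le
          _ = K ^ (m + 1) * ρ := by ring
  have hCmem : ∀ j, j < p → f^[j] z₀ ∈ C := by
    intro j hj
    rw [hC]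
    exact ⟨j, hj, rfl⟩
  have hbasin : ∀ w ∈ closedBall z₀ ρ,
      Tendsto (fun n => Metric.infDist (f^[n] w) C) atTop (𝓝 0) := by
    intro w hw
    rw [Metric.tendsto_atTop]
    intro ε hε
    -- uniform continuity of the finitely many maps f^[j], j < p, at z₀
    have hj : ∀ j : ℕ, ∀ᶠ x in 𝓝 z₀, dist (f^[j] x) (f^[j] z₀) < ε := by
      intro j
      have : ContinuousAt (fun x => dist (f^[j] x) (f^[j] z₀)) z₀ :=
        ((hcit j).continuousAt).dist continuousAt_const
      have h0 : dist (f^[j] z₀) (f^[j] z₀) = 0 := dist_self _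
      have := this (Iio_mem_nhds (by rw [h0]; exact hε : dist (f^[j] z₀) (f^[j] z₀) < ε))
      exact this
    have hall : ∀ᶠ x in 𝓝 z₀, ∀ j ∈ Finset.range p, dist (f^[j] x) (f^[j] z₀) < ε :=
      (Filter.eventually_all_finset _).2 (fun j _ => hj j)
    obtain ⟨δ, hδpos, hδ⟩ := Metric.eventually_nhds_iff.1 hall
    -- choose M with K^M * ρ < δ
    have htend : Tendsto (fun m : ℕ => K ^ m * ρ) atTop (𝓝 0) := by
      have := tendsto_pow_atTop_nhds_zero_of_lt_one hKpos.le hK1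
      simpa using this.mul_const ρ
    obtain ⟨M, hM⟩ := (htend.eventually (Iio_mem_nhds hδpos)).exists_forall_of_atTop
    refine ⟨p * (M + 1), ?_⟩
    intro n hn
    have hppos : 0 < p := hp
    have hMle : M ≤ n / p := by
      have h1 : p * (M + 1) ≤ n := hn
      have := Nat.div_le_div_right (c := p) h1
      rw [Nat.mul_div_cancel_left _ hppos] at this
      omega
    have hsplit : f^[n] w = f^[n % p] ((f^[p])^[n / p] w) := by
      conv_lhs => rw [← Nat.mod_add_div n p]
      rw [Function.iterate_add_apply, ← Function.iterate_mul]
    have hclose : dist ((f^[p])^[n / p] w) z₀ < δ := by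
      rw [dist_eq_norm]
      calc ‖(f^[p])^[n / p] w - z₀‖ ≤ K ^ (n / p) * ρ := (hgiter w hw (n / p)).2
        _ < δ := hM (n / p) hMle
    have hdist : dist (f^[n] w) (f^[n % p] z₀) < ε := by
      rw [hsplit]
      exact hδ hclose (n % p) (Finset.mem_range.2 (Nat.mod_lt n hppos))
    have hinf : Metric.infDist (f^[n] w) C ≤ dist (f^[n] w) (f^[n % p] z₀) :=
      Metric.infDist_le_dist_of_mem (hCmem _ (Nat.mod_lt n hppos))
    rw [Real.dist_eq, sub_zero, _root_.abs_of_nonneg Metric.infDist_nonneg]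
    exact lt_of_le_of_lt hinf hdist
  -- z₀ is not 0
  have hz₀ne : z₀ ≠ 0 := by
    obtain ⟨q, rfl⟩ : ∃ q, p = q + 1 := ⟨p - 1, by omega⟩
    rw [← hper, Function.iterate_succ_apply']
    exact hfne _
  have hz₀pos : 0 < ‖z₀‖ := norm_pos_iff.2 hz₀ne
  set r1 : ℝ := min ρ ‖z₀‖ / 2 with hr1def
  have hr1pos : 0 < r1 := by
    rw [hr1def]
    have := lt_min hρpos hz₀pos
    positivity
  have hr1ρ : r1 ≤ ρ / 2 := by
    rw [hr1def]
    have := min_le_left ρ ‖z₀‖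
    linarith
  have hr1z₀ : r1 < ‖z₀‖ := by
    rw [hr1def]
    have := min_le_right ρ ‖z₀‖
    linarith
  -- THE CLAIM: the orbit of 0 hits ball z₀ r1
  have hclaim : ∃ N, f^[N] (0 : ℂ) ∈ ball z₀ r1 := by
    by_contra hcon
    push_neg at hcon
    -- inverse branch construction
    have hinv : ∀ m : ℕ, ∃ H : ℂ → ℂ, DifferentiableOn ℂ H (ball z₀ r1) ∧
        (∀ z ∈ ball z₀ r1, f^[p * m] (H z) = z) ∧ H z₀ = z₀ := by
      intro m
      induction m with
      | zero => exact ⟨id, differentiableOn_id, by simp, rfl⟩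
      | succ m ih =>
        obtain ⟨H, hHd, hHinv, hH0⟩ := ih
        have inner : ∀ j, j ≤ p → ∃ G : ℂ → ℂ, DifferentiableOn ℂ G (ball z₀ r1) ∧
            (∀ z ∈ ball z₀ r1, f^[j] (G z) = H z) ∧ G z₀ = f^[p - j] z₀ := by
          intro j
          induction j with
          | zero =>
            intro _
            exact ⟨H, hHd, fun z _ => rfl, by rw [Nat.sub_zero, hper, hH0]⟩
          | succ j ihj =>
            intro hj1
            obtain ⟨G, hGd, hGinv, hG0⟩ := ihj (Nat.le_of_succ_le hj1)
            have hG0' : ∀ z ∈ ball z₀ r1, G z ≠ 0 := by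
              intro z hz hGz
              apply hcon (p * m + j)
              have : f^[p * m + j] (0 : ℂ) = z := by
                rw [Function.iterate_add_apply, ← hGz, hGinv z hz, hHinv z hz]
              rwa [this]
            obtain ⟨L, hLd, hLexp⟩ := Stmt14Aux.exists_log (G := fun z => lam⁻¹ * G z)
              hr1pos ((differentiableOn_const _).mul hGd)
              (fun z hz => mul_ne_zero (inv_ne_zero hlam) (hG0' z hz))
            have hfL : ∀ z ∈ ball z₀ r1, f (L z) = G z := by
              intro z hz
              rw [hf]
              simp only
              rw [hLexp z hz]
              field_simp
            have hppj : p - j = (p - (j + 1)) + 1 := by omega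
            have hfpt : f (f^[p - (j + 1)] z₀) = f^[p - j] z₀ := by
              rw [hppj, Function.iterate_succ_apply']
            have hfinj : ∀ x y : ℂ, f x = f y → Complex.exp x = Complex.exp y := by
              intro x y hxy
              rw [hf] at hxy
              simp only at hxy
              exact mul_left_cancel₀ hlam hxy
            have hbase : f (L z₀) = f (f^[p - (j + 1)] z₀) := by
              rw [hfL z₀ (mem_ball_self hr1pos), hG0, hfpt]
            have hexp2 : Complex.exp (L z₀) = Complex.exp (f^[p - (j + 1)] z₀) :=
              hfinj _ _ hbase
            obtain ⟨n, hn⟩ := Complex.exp_eq_exp_iff_exists_int.1 hexp2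
            refine ⟨fun z => L z - n * (2 * Real.pi * Complex.I), ?_, ?_, ?_⟩
            · exact hLd.sub (differentiableOn_const _)
            · intro z hz
              rw [Function.iterate_succ_apply]
              have hfG' : f (L z - n * (2 * Real.pi * Complex.I)) = G z := by
                rw [hf]
                simp only
                rw [Complex.exp_sub, Complex.exp_int_mul_two_pi_mul_I, div_one, hLexp z hz]
                field_simp
              rw [hfG', hGinv z hz]
            · show L z₀ - n * (2 * Real.pi * Complex.I) = f^[p - (j + 1)] z₀
              rw [hn]
              ring
        obtain ⟨G, hGd, hGinv, hG0⟩ := inner p le_rfl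
        refine ⟨G, hGd, ?_, by simpa using hG0⟩
        intro z hz
        have hpm : p * (m + 1) = p * m + p := by ring
        rw [hpm, Function.iterate_add_apply, hGinv z hz, hHinv z hz]
    -- derivative of the inverse branches
    have hderH : ∀ m : ℕ, ∃ H : ℂ → ℂ, DifferentiableOn ℂ H (ball z₀ r1) ∧
        (∀ z ∈ ball z₀ r1, f^[p * m] (H z) = z) ∧ H z₀ = z₀ ∧
        ‖deriv H z₀‖ = (‖μ‖⁻¹) ^ m := by
      intro m
      obtain ⟨H, hHd, hHinv, hH0⟩ := hinv m
      refine ⟨H, hHd, hHinv, hH0, ?_⟩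
      have hz₀mem : z₀ ∈ ball z₀ r1 := mem_ball_self hr1pos
      have hHdiff : DifferentiableAt ℂ H z₀ := hHd.differentiableAt (isOpen_ball.mem_nhds hz₀mem)
      have hev : (fun z => f^[p * m] (H z)) =ᶠ[𝓝 z₀] id := by
        filter_upwards [isOpen_ball.mem_nhds hz₀mem] with z hz using hHinv z hz
      have hd1 : deriv (fun z => f^[p * m] (H z)) z₀ = 1 := by
        rw [hev.deriv_eq, deriv_id]
      have hd2 : deriv (fun z => f^[p * m] (H z)) z₀ =
          deriv (f^[p * m]) (H z₀) * deriv H z₀ := by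
        exact deriv_comp (x := z₀) ((hPd (p * m) (H z₀)).differentiableAt) hHdiff
      rw [hd1] at hd2
      have hd3 : deriv (f^[p * m]) (H z₀) = μ ^ m := by
        rw [hH0, (hPd (p * m) z₀).deriv, hPm m]
      rw [hd3] at hd2
      have hd4 : deriv H z₀ = (μ ^ m)⁻¹ := eq_inv_of_mul_eq_one_right hd2.symm
      rw [hd4, norm_inv, norm_pow, inv_pow]
    -- choose m large
    have h1μ : 1 < ‖μ‖⁻¹ := (one_lt_inv₀ hμpos).2 hμ1
    have htend2 : Tendsto (fun m : ℕ => (‖μ‖⁻¹) ^ m) atTop atTop :=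
      tendsto_pow_atTop_atTop_of_one_lt h1μ
    obtain ⟨m, hm1, hm2⟩ := ((htend2.eventually_gt_atTop (98 * (Real.pi + 1) / r1)).and
      (eventually_ge_atTop 1)).exists
    obtain ⟨H, hHd, hHinv, hH0, hHder⟩ := hderH m
    obtain ⟨w, hw⟩ := Stmt14Aux.bloch hr1pos hHd
    have hrad : Real.pi < r1 * ‖deriv H z₀‖ / 98 := by
      rw [hHder]
      rw [div_lt_iff₀ hr1pos] at hm1
      calc Real.pi < Real.pi + 1 := by linarith
        _ ≤ r1 * (‖μ‖⁻¹) ^ m / 98 := by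
            rw [le_div_iff₀ (by norm_num : (0:ℝ) < 98)]
            nlinarith [hm1]
    have hu1 : w - Real.pi * Complex.I ∈ ball w (r1 * ‖deriv H z₀‖ / 98) := by
      rw [mem_ball, dist_eq_norm]
      have : ‖w - Real.pi * Complex.I - w‖ = Real.pi := by
        rw [sub_sub_cancel_left, norm_neg, norm_mul, Complex.norm_I, mul_one,
          Complex.norm_real, Real.norm_eq_abs, abs_of_pos Real.pi_pos]
      rw [this]; exact hrad
    have hu2 : w + Real.pi * Complex.I ∈ ball w (r1 * ‖deriv H z₀‖ / 98) := by
      rw [mem_ball, dist_eq_norm]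
      have : ‖w + Real.pi * Complex.I - w‖ = Real.pi := by
        rw [add_sub_cancel_left, norm_mul, Complex.norm_I, mul_one,
          Complex.norm_real, Real.norm_eq_abs, abs_of_pos Real.pi_pos]
      rw [this]; exact hrad
    obtain ⟨a, ha, hHa⟩ := hw hu1
    obtain ⟨b, hb, hHb⟩ := hw hu2
    have hpm1 : 1 ≤ p * m := Nat.one_le_iff_ne_zero.2 (by positivity)
    obtain ⟨k, hk⟩ : ∃ k, p * m = k + 1 := ⟨p * m - 1, by omega⟩
    have hHba : H b = H a + 2 * Real.pi * Complex.I := by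
      rw [hHa, hHb]; ring
    have hfeq : f (H b) = f (H a) := by rw [hHba]; exact hperiod _
    have hab : a = b := by
      have h3 : f^[p * m] (H a) = a := hHinv a ha
      have h4 : f^[p * m] (H b) = b := hHinv b hb
      have h6 : f^[p * m] (H a) = f^[p * m] (H b) := by
        rw [hk, Function.iterate_succ_apply, Function.iterate_succ_apply, hfeq]
      rw [← h3, h6, h4]
    rw [hab, hHb] at hHa
    have hπ : (Real.pi : ℂ) * Complex.I = 0 := by
      have : w + Real.pi * Complex.I - (w - Real.pi * Complex.I) = 0 := by rw [hHa]; ring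
      have h5 : (2 : ℂ) * (Real.pi * Complex.I) = 0 := by linear_combination this
      simpa using h5
    have : (Real.pi : ℂ) = 0 ∨ Complex.I = 0 := mul_eq_zero.1 hπ
    rcases this with h | h
    · exact Real.pi_ne_zero (by exact_mod_cast h) 
    · exact Complex.I_ne_zero h
  -- FINAL ASSEMBLY
  obtain ⟨N, hN⟩ := hclaim
  obtain ⟨δ, hδpos, hδ⟩ := Metric.continuousAt_iff.1 (hcit N).continuousAt (ρ / 2)
    (by positivity)
  have hlampos : 0 < ‖lam‖ := norm_pos_iff.2 hlam
  refine ⟨Real.log (δ / ‖lam‖), ?_⟩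
  intro z hz
  rw [Set.mem_setOf_eq] at hz
  rw [hB, Set.mem_setOf_eq]
  -- f z is small
  have hsmall : ‖f z‖ < δ := by
    rw [hf]
    simp only
    rw [norm_mul, show ‖Complex.exp z‖ = Real.exp z.re from by
      rw [Complex.norm_exp]]
    have h1 : Real.exp z.re < Real.exp (Real.log (δ / ‖lam‖)) := Real.exp_lt_exp.2 hz
    rw [Real.exp_log (by positivity : (0:ℝ) < δ / ‖lam‖)] at h1
    calc ‖lam‖ * Real.exp z.re < ‖lam‖ * (δ / ‖lam‖) :=
          mul_lt_mul_of_pos_left h1 hlampos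
      _ = δ := by
          rw [mul_comm, div_mul_cancel₀ _ (ne_of_gt hlampos)]
  have h1 : dist (f z) 0 < δ := by rwa [dist_zero_right]
  have h2 : dist (f^[N] (f z)) (f^[N] 0) < ρ / 2 := hδ h1
  have h3 : f^[N] (f z) ∈ closedBall z₀ ρ := by
    rw [mem_closedBall]
    have h4 : dist (f^[N] 0) z₀ < r1 := mem_ball.1 hN
    calc dist (f^[N] (f z)) z₀ ≤ dist (f^[N] (f z)) (f^[N] 0) + dist (f^[N] 0) z₀ :=
          dist_triangle _ _ _
      _ ≤ ρ / 2 + r1 := by linarith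
      _ ≤ ρ / 2 + ρ / 2 := by linarith
      _ = ρ := by ring
  have h5 := hbasin _ h3
  apply (Filter.tendsto_add_atTop_iff_nat (N + 1)).1
  convert h5 using 1
  funext n
  rw [Function.iterate_add_apply, Function.iterate_succ_apply]
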